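/- Let α ∈ (0,1), x ∈ (0,α], and suppose T_α^m(x) > 0 for some m ≥ 1. Then there exists n ≥ 1 with T_α^m(x) = T₁^n(x), where T₁ is the Gauss map; i.e., every positive point in the T_α-orbit of x lies in the Gauss-map orbit of x. -/

import Mathlib

/-- The α-continued fraction map T_α on [α−1, α]. -/
noncomputable def TCF (α x : ℝ) : ℝ := if x = 0 then 0 else |1/x| - ⌊|1/x| + 1 - α⌋

/-- The Gauss map T₁(x) = 1/x − ⌊1/x⌋. -/
noncomputable def gaussMap (x : ℝ) : ℝ := if x = 0 then 0 else Int.fract (1/x)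

private lemma gauss_of_pos {t : ℝ} (ht : 0 < t) : gaussMap t = Int.fract (1/t) := by
  simp [gaussMap, ht.ne']

private lemma gauss_mem {t : ℝ} (h0 : 0 ≤ t) (h1 : t < 1) :
    0 ≤ gaussMap t ∧ gaussMap t < 1 := by
  rcases eq_or_lt_of_le h0 with h | h
  · simp [gaussMap, ← h]
  · rw [gauss_of_pos h]
    exact ⟨Int.fract_nonneg _, Int.fract_lt_one _⟩

private lemma floor_shift {α : ℝ} (hα : α ∈ Set.Ioo (0:ℝ) 1) (f : ℝ)
    (h0 : 0 ≤ f) (h1 : f < 1) :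
    ⌊f + 1 - α⌋ = if α ≤ f then 1 else 0 := by
  obtain ⟨hα0, hα1⟩ := hα
  split_ifs with h
  · rw [Int.floor_eq_iff]
    constructor <;> push_cast <;> linarith
  · push_neg at h
    rw [Int.floor_eq_iff]
    constructor <;> push_cast <;> linarith

private lemma posStep {α : ℝ} (hα : α ∈ Set.Ioo (0:ℝ) 1) {t : ℝ} (h0 : 0 < t) (h1 : t < 1) :
    TCF α t = gaussMap t - if α ≤ gaussMap t then 1 else 0 := by
  have ht : t ≠ 0 := h0.ne'
  have h1t : (0:ℝ) < 1/t := by positivity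
  rw [TCF, if_neg ht, abs_of_pos h1t, gauss_of_pos h0]
  have hsplit : 1/t + 1 - α = (⌊1/t⌋ : ℝ) + (Int.fract (1/t) + 1 - α) := by
    rw [Int.fract]; ring
  rw [hsplit, Int.floor_intCast_add,
    floor_shift hα _ (Int.fract_nonneg _) (Int.fract_lt_one _)]
  have hfr : (⌊1/t⌋:ℝ) + Int.fract (1/t) = 1/t := Int.floor_add_fract _
  split_ifs <;> push_cast <;> linarith

private lemma negStep1 {α : ℝ} (hα : α ∈ Set.Ioo (0:ℝ) 1) {g : ℝ} (h0 : 0 < g) (h1 : g < 1) :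
    TCF α (1/(1+g) - 1) = gaussMap g - if α ≤ gaussMap g then 1 else 0 := by
  have hg1 : (0:ℝ) < 1 + g := by linarith
  have hy : 1/(1+g) - 1 = -(g/(1+g)) := by field_simp; ring
  have hypos : 0 < g/(1+g) := by positivity
  have hyne : 1/(1+g) - 1 ≠ 0 := by rw [hy]; intro h; nlinarith [neg_eq_zero.mp h]
  have hinv : 1/(1/(1+g) - 1) = -((1+g)/g) := by
    rw [hy, one_div, inv_neg, inv_div]
  rw [TCF, if_neg hyne, hinv, abs_neg, abs_of_pos (by positivity), gauss_of_pos h0]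
  have h2 : (1+g)/g = 1/g + 1 := by field_simp
  rw [h2]
  have hsplit : 1/g + 1 + 1 - α = ((⌊1/g⌋ + 1 : ℤ) : ℝ) + (Int.fract (1/g) + 1 - α) := by
    rw [Int.fract]; push_cast; ring
  rw [hsplit, Int.floor_intCast_add,
    floor_shift hα _ (Int.fract_nonneg _) (Int.fract_lt_one _)]
  have hfr : (⌊1/g⌋:ℝ) + Int.fract (1/g) = 1/g := Int.floor_add_fract _
  split_ifs <;> push_cast <;> linarith

private lemma negStep2 {α : ℝ} (hα : α ∈ Set.Ioo (0:ℝ) 1) {s : ℝ}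
    (h1 : 1 < s) (h2 : s ≤ 1/α - 1) :
    TCF α (1/(s+1) - 1) = 1/s - 1 := by
  obtain ⟨hα0, hα1⟩ := hα
  have hs0 : (0:ℝ) < s := by linarith
  have hs1 : (0:ℝ) < s + 1 := by linarith
  have hy : 1/(s+1) - 1 = -(s/(s+1)) := by field_simp; ring
  have hypos : 0 < s/(s+1) := by positivity
  have hyne : 1/(s+1) - 1 ≠ 0 := by rw [hy]; intro h; nlinarith [neg_eq_zero.mp h]
  have hinv : 1/(1/(s+1) - 1) = -((s+1)/s) := by rw [hy, one_div, inv_neg, inv_div]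
  rw [TCF, if_neg hyne, hinv, abs_neg, abs_of_pos (by positivity)]
  have h2' : (s+1)/s = 1/s + 1 := by field_simp; ring
  rw [h2']
  -- bounds on u = 1/s : α < u < 1
  have hiα : (0:ℝ) < 1/α := by positivity
  have hu1 : 1/s < 1 := by rw [div_lt_one hs0]; linarith
  have huα : α < 1/s := by
    rw [lt_div_iff₀ hs0]
    have : s < 1/α := by linarith
    calc α * s < α * (1/α) := by exact mul_lt_mul_of_pos_left this hα0
    _ = 1 := by field_simp
  have hfl : ⌊1/s + 1 + 1 - α⌋ = 2 := by
    rw [Int.floor_eq_iff]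
    constructor <;> push_cast <;> linarith
  rw [hfl]; push_cast; ring

private lemma negStepHalf {α : ℝ} (hα : α ∈ Set.Ioo (0:ℝ) 1) :
    TCF α (1/(2:ℝ) - 1) = 0 := by
  obtain ⟨hα0, hα1⟩ := hα
  have h1 : (1/(2:ℝ) - 1) = -(1/2) := by norm_num
  have hne : (1/(2:ℝ) - 1) ≠ 0 := by norm_num
  have habs : |1/(1/(2:ℝ) - 1)| = 2 := by rw [h1]; norm_num
  rw [TCF, if_neg hne, habs]
  have hfl : ⌊(2:ℝ) + 1 - α⌋ = 2 := by
    rw [Int.floor_eq_iff]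
    constructor <;> push_cast <;> linarith
  rw [hfl]; norm_num

private lemma rep {w : ℝ} (h0 : 0 < w) (h1 : w < 1) :
    ∃ b : ℕ, 1 ≤ b ∧ (b:ℝ) + gaussMap w = 1/w := by
  have hw : 1 < 1/w := one_lt_one_div h0 h1
  have hfl : 1 ≤ ⌊1/w⌋ := by
    rw [Int.le_floor]; exact_mod_cast hw.le
  refine ⟨⌊1/w⌋.toNat, by omega, ?_⟩
  rw [gauss_of_pos h0]
  have hcast : ((⌊1/w⌋.toNat : ℕ) : ℝ) = (⌊1/w⌋ : ℝ) := by
    exact_mod_cast Int.toNat_of_nonneg (by omega)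
  rw [hcast]
  exact Int.floor_add_fract _

private lemma toB {α : ℝ} (hα : α ∈ Set.Ioo (0:ℝ) 1) {w : ℝ} (hw : α ≤ w) (h1 : w < 1) :
    ∃ b : ℕ, 1 ≤ b ∧ 1 < (b:ℝ) + gaussMap w ∧ (b:ℝ) + gaussMap w ≤ 1/α ∧
      w - 1 = 1/((b:ℝ) + gaussMap w) - 1 := by
  have h0 : 0 < w := lt_of_lt_of_le hα.1 hw
  obtain ⟨b, hb1, hb⟩ := rep h0 h1
  refine ⟨b, hb1, ?_, ?_, ?_⟩
  · rw [hb]; exact one_lt_one_div h0 h1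
  · rw [hb]; exact one_div_le_one_div_of_le hα.1 hw
  · rw [hb, one_div_one_div]

/-- If α ∈ (0,1), x ∈ (0,α] and T_α^m(x) > 0 for some m ≥ 1, then there is n ≥ 1
with T_α^m(x) = T₁ⁿ(x): every positive point of the T_α-orbit of x lies in the
Gauss-map orbit of x. -/
theorem positive_orbit_point_in_gauss_orbit (α x : ℝ) (hα : α ∈ Set.Ioo (0:ℝ) 1)
    (hx : x ∈ Set.Ioc (0:ℝ) α) (m : ℕ) (hm : 1 ≤ m) (hpos : 0 < (TCF α)^[m] x) :
    ∃ n : ℕ, 1 ≤ n ∧ (TCF α)^[m] x = gaussMap^[n] x := by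
  obtain ⟨hα0, hα1⟩ := hα
  obtain ⟨hx0, hxα⟩ := hx
  have hx1 : x < 1 := lt_of_le_of_lt hxα hα1
  have hg : ∀ n, 0 ≤ gaussMap^[n] x ∧ gaussMap^[n] x < 1 := by
    intro n
    induction n with
    | zero => exact ⟨hx0.le, hx1⟩
    | succ n ih =>
      rw [Function.iterate_succ_apply']
      exact gauss_mem ih.1 ih.2
  have hgs : ∀ n, gaussMap (gaussMap^[n] x) = gaussMap^[n+1] x := by
    intro n; rw [Function.iterate_succ_apply']
  have key : ∀ k : ℕ,
      (∃ n : ℕ, (k = 0 ∨ 1 ≤ n) ∧ (TCF α)^[k] x = gaussMap^[n] x) ∨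
      (∃ n b : ℕ, 1 ≤ n ∧ 1 ≤ b ∧ 1 < (b:ℝ) + gaussMap^[n] x ∧
        (b:ℝ) + gaussMap^[n] x ≤ 1/α ∧
        (TCF α)^[k] x = 1/((b:ℝ) + gaussMap^[n] x) - 1) := by
    intro k
    induction k with
    | zero => exact Or.inl ⟨0, Or.inl rfl, rfl⟩
    | succ k ih =>
      rw [Function.iterate_succ_apply']
      rcases ih with ⟨n, _, hy⟩ | ⟨n, b, hn, hb, hgt, hle, hy⟩
      · rw [hy]
        rcases eq_or_lt_of_le (hg n).1 with h0 | h0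
        · -- g n = 0 : stays 0
          left
          refine ⟨n+1, Or.inr (by omega), ?_⟩
          rw [← hgs n, ← h0]
          simp [TCF, gaussMap]
        · rw [posStep ⟨hα0, hα1⟩ h0 (hg n).2, hgs n]
          by_cases hc : α ≤ gaussMap^[n+1] x
          · right
            obtain ⟨b, hb1, hb2, hb3, hb4⟩ := toB ⟨hα0, hα1⟩ hc (hg (n+1)).2
            rw [hgs (n+1)] at hb2 hb3 hb4
            exact ⟨n+2, b, by omega, hb1, hb2, hb3, by rw [if_pos hc]; exact hb4⟩
          · left
            exact ⟨n+1, Or.inr (by omega), by rw [if_neg hc]; ring⟩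
      · rw [hy]
        rcases Nat.lt_or_ge b 2 with hb2 | hb2
        · -- b = 1
          have hb1 : b = 1 := by omega
          subst hb1
          have hgn0 : 0 < gaussMap^[n] x := by
            have : ((1:ℕ):ℝ) = 1 := by norm_num
            rw [this] at hgt; linarith
          have hrw : ((1:ℕ):ℝ) + gaussMap^[n] x = 1 + gaussMap^[n] x := by norm_num
          rw [hrw, negStep1 ⟨hα0, hα1⟩ hgn0 (hg n).2, hgs n]
          by_cases hc : α ≤ gaussMap^[n+1] x
          · right
            obtain ⟨b, hb1, hb2, hb3, hb4⟩ := toB ⟨hα0, hα1⟩ hc (hg (n+1)).2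
            rw [hgs (n+1)] at hb2 hb3 hb4
            exact ⟨n+2, b, by omega, hb1, hb2, hb3, by rw [if_pos hc]; exact hb4⟩
          · left
            exact ⟨n+1, Or.inr (by omega), by rw [if_neg hc]; ring⟩
        · -- b ≥ 2
          have hbR : (2:ℝ) ≤ (b:ℝ) := by exact_mod_cast hb2
          have hs1 : 1 ≤ (b:ℝ) - 1 + gaussMap^[n] x := by
            have := (hg n).1; linarith
          rcases eq_or_lt_of_le hs1 with heq | hlt
          · -- b = 2, g n = 0
            have hgn0 : gaussMap^[n] x = 0 := by
              have := (hg n).1; nlinarith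
            have hb2' : (b:ℝ) = 2 := by rw [hgn0] at heq; linarith
            left
            refine ⟨n+1, Or.inr (by omega), ?_⟩
            rw [hgn0, hb2', ← hgs n, hgn0]
            have : 1/((2:ℝ) + 0) - 1 = 1/(2:ℝ) - 1 := by norm_num
            rw [this, negStepHalf ⟨hα0, hα1⟩]
            simp [gaussMap]
          · -- genuine step: b decreases
            set s : ℝ := (b:ℝ) - 1 + gaussMap^[n] x with hs
            have hrw : 1/((b:ℝ) + gaussMap^[n] x) - 1 = 1/(s+1) - 1 := by
              rw [hs]; ring_nf
            have hsle : s ≤ 1/α - 1 := by rw [hs]; linarith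
            rw [hrw, negStep2 ⟨hα0, hα1⟩ hlt hsle]
            right
            have hcast : ((b-1 : ℕ):ℝ) = (b:ℝ) - 1 := by
              have : (1:ℕ) ≤ b := by omega
              push_cast [Nat.cast_sub this]; ring
            refine ⟨n, b-1, hn, by omega, ?_, ?_, ?_⟩
            · rw [hcast]; exact hlt
            · rw [hcast]
              have : (0:ℝ) ≤ 1 := by norm_num
              linarith
            · rw [hcast]
  rcases key m with ⟨n, hn, he⟩ | ⟨n, b, _, _, hgt, _, he⟩
  · refine ⟨n, ?_, he⟩
    rcases hn with h | h
    · omega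
    · exact h
  · exfalso
    rw [he] at hpos
    have h0 : (0:ℝ) < (b:ℝ) + gaussMap^[n] x := by linarith
    have : 1/((b:ℝ) + gaussMap^[n] x) < 1 := by
      rw [div_lt_one h0]; linarith
    linarith
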